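/- Let ε₀ and ε₁ be i.i.d. integrable real random variables whose common distribution is symmetric about zero, and let Δ = ε₁ − ε₀. Fix β₁ ≥ 0 and c₀, c₁ ≥ 0, set c* = √(c₁² + 2c₀), and define b₁ = β₁ + Δ − c₁ if β₁ + Δ ≥ c*, b₁ = β₁ + Δ + c₁ if β₁ + Δ ≤ −c*, and b₁ = 0 otherwise. Then E[b₁] ≥ 0. Equivalently, for arbitrary sign of β₁ (with the estimator defined from β₁ + Δ in the same way), β₁·E[b₁] ≥ 0: the penalized slope estimator's mean has the same sign as the true coefficient β₁. -/

import Mathlib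

open MeasureTheory ProbabilityTheory

/-- Let `ε₀, ε₁` be i.i.d. integrable, symmetric about zero, and
`Δ = ε₁ − ε₀`. With `c* = √(c₁² + 2c₀)` and the penalized slope estimator
`b₁ = β₁ + Δ − c₁` if `β₁ + Δ ≥ c*`, `b₁ = β₁ + Δ + c₁` if `β₁ + Δ ≤ −c*`,
`b₁ = 0` otherwise: if `β₁ ≥ 0` then `E[b₁] ≥ 0`; and for arbitrary sign of
`β₁`, `β₁ · E[b₁] ≥ 0`. -/
theorem stmt6 {Ω : Type*} [MeasurableSpace Ω] (μ : Measure Ω)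
    [IsProbabilityMeasure μ] (ε₀ ε₁ : Ω → ℝ)
    (hmeas₀ : Measurable ε₀) (hmeas₁ : Measurable ε₁)
    (hint₀ : Integrable ε₀ μ) (hint₁ : Integrable ε₁ μ)
    (hindep : IndepFun ε₀ ε₁ μ) (hid : IdentDistrib ε₀ ε₁ μ μ)
    (hsym : μ.map ε₀ = μ.map (fun ω => -ε₀ ω))
    (β₁ c₀ c₁ : ℝ) (hc₀ : 0 ≤ c₀) (hc₁ : 0 ≤ c₁)
    (cstar : ℝ) (hcstar : cstar = Real.sqrt (c₁ ^ 2 + 2 * c₀))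
    (b₁ : Ω → ℝ)
    (hb₁ : ∀ ω, b₁ ω =
      if cstar ≤ β₁ + (ε₁ ω - ε₀ ω) then β₁ + (ε₁ ω - ε₀ ω) - c₁
      else if β₁ + (ε₁ ω - ε₀ ω) ≤ -cstar then β₁ + (ε₁ ω - ε₀ ω) + c₁
      else 0) :
    (0 ≤ β₁ → 0 ≤ ∫ ω, b₁ ω ∂μ) ∧ 0 ≤ β₁ * ∫ ω, b₁ ω ∂μ := by
  set g : ℝ → ℝ := fun x => if cstar ≤ x then x - c₁ else if x ≤ -cstar then x + c₁ else 0
    with hg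
  have hcc : c₁ ≤ cstar := by
    rw [hcstar]
    nlinarith [Real.sq_sqrt (show (0:ℝ) ≤ c₁ ^ 2 + 2 * c₀ by positivity),
      Real.sqrt_nonneg (c₁ ^ 2 + 2 * c₀)]
  have hc0 : 0 ≤ cstar := le_trans hc₁ hcc
  have hmono : Monotone g := by
    intro x y hxy
    simp only [hg]
    split_ifs <;> linarith
  have hodd : ∀ x, g (-x) = -g x := by
    intro x
    simp only [hg]
    split_ifs <;> linarith
  have habs : ∀ x, |g x| ≤ |x| := by
    intro x
    simp only [hg]
    split_ifs with h1 h2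
    · rw [abs_of_nonneg (by linarith), abs_of_nonneg (by linarith)]; linarith
    · rw [abs_of_nonpos (by linarith), abs_of_nonpos (by linarith)]; linarith
    · simpa using abs_nonneg x
  have hgm : Measurable g := by
    apply Measurable.ite (measurableSet_le measurable_const measurable_id)
      (measurable_id.sub measurable_const)
    exact Measurable.ite (measurableSet_le measurable_id measurable_const)
      (measurable_id.add measurable_const) measurable_const
  have hΔm : Measurable (fun ω => ε₁ ω - ε₀ ω) := hmeas₁.sub hmeas₀
  have hΔ'm : Measurable (fun ω => ε₀ ω - ε₁ ω) := hmeas₀.sub hmeas₁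
  have hΔint : Integrable (fun ω => ε₁ ω - ε₀ ω) μ := hint₁.sub hint₀
  -- symmetry of Δ
  have h1 : μ.map (fun ω => (ε₀ ω, ε₁ ω)) = (μ.map ε₀).prod (μ.map ε₁) :=
    (indepFun_iff_map_prod_eq_prod_map_map hmeas₀.aemeasurable hmeas₁.aemeasurable).mp hindep
  have h2 : μ.map (fun ω => (ε₁ ω, ε₀ ω)) = (μ.map ε₁).prod (μ.map ε₀) :=
    (indepFun_iff_map_prod_eq_prod_map_map hmeas₁.aemeasurable hmeas₀.aemeasurable).mp hindep.symm
  have hpair : IdentDistrib (fun ω => (ε₀ ω, ε₁ ω)) (fun ω => (ε₁ ω, ε₀ ω)) μ μ :=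
    ⟨(hmeas₀.prodMk hmeas₁).aemeasurable, (hmeas₁.prodMk hmeas₀).aemeasurable,
      by rw [h1, h2, hid.map_eq]⟩
  have hΔsym : IdentDistrib (fun ω => ε₁ ω - ε₀ ω) (fun ω => ε₀ ω - ε₁ ω) μ μ :=
    hpair.comp (measurable_snd.sub measurable_fst)
  -- ∫ g(Δ) = 0
  have hgΔint : Integrable (fun ω => g (ε₁ ω - ε₀ ω)) μ := by
    refine Integrable.mono hΔint ((hgm.comp hΔm).aestronglyMeasurable) ?_
    exact ae_of_all _ fun ω => by simpa [Real.norm_eq_abs] using habs (ε₁ ω - ε₀ ω)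
  have hzero : ∫ ω, g (ε₁ ω - ε₀ ω) ∂μ = 0 := by
    have := (hΔsym.comp hgm).integral_eq
    have h3 : ∫ ω, g (ε₀ ω - ε₁ ω) ∂μ = -∫ ω, g (ε₁ ω - ε₀ ω) ∂μ := by
      rw [← integral_neg]
      exact integral_congr_ae (ae_of_all _ fun ω => by
        show g (ε₀ ω - ε₁ ω) = -g (ε₁ ω - ε₀ ω)
        rw [show ε₀ ω - ε₁ ω = -(ε₁ ω - ε₀ ω) by ring, hodd])
    simp only [Function.comp] at this
    linarith [this, h3]
  -- integrability of b₁
  have hbeq : ∀ ω, b₁ ω = g (β₁ + (ε₁ ω - ε₀ ω)) := fun ω => hb₁ ω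
  have hbint : Integrable b₁ μ := by
    have hint' : Integrable (fun ω => β₁ + (ε₁ ω - ε₀ ω)) μ := (integrable_const β₁).add hΔint
    refine Integrable.mono hint' ?_ ?_
    · have : Measurable b₁ := by
        simpa [funext hbeq, Function.comp_def] using hgm.comp (show Measurable (fun ω => β₁ + (ε₁ ω - ε₀ ω)) from (measurable_const).add hΔm)
      exact this.aestronglyMeasurable
    · exact ae_of_all _ fun ω => by
        rw [hbeq ω]; simpa [Real.norm_eq_abs] using habs (β₁ + (ε₁ ω - ε₀ ω))
  have key_pos : 0 ≤ β₁ → 0 ≤ ∫ ω, b₁ ω ∂μ := by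
    intro hβ
    have : ∫ ω, g (ε₁ ω - ε₀ ω) ∂μ ≤ ∫ ω, b₁ ω ∂μ := by
      refine integral_mono hgΔint hbint fun ω => ?_
      rw [hbeq ω]
      exact hmono (by linarith)
    linarith [hzero]
  refine ⟨key_pos, ?_⟩
  rcases le_or_gt 0 β₁ with hβ | hβ
  · exact mul_nonneg hβ (key_pos hβ)
  · have : ∫ ω, b₁ ω ∂μ ≤ 0 := by
      have : ∫ ω, b₁ ω ∂μ ≤ ∫ ω, g (ε₁ ω - ε₀ ω) ∂μ := by
        refine integral_mono hbint hgΔint fun ω => ?_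
        rw [hbeq ω]
        exact hmono (by linarith)
      linarith [hzero]
    nlinarith [mul_nonneg (neg_nonneg.2 hβ.le) (neg_nonneg.2 this)]
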